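/- For each agent i ∈ [n], the set C_i = {w ∈ Δ_{n−1} : there exists an allocation A of {1,…,m+1} maximizing Σ_k (w_k + η) v̄_k(A_k) over all allocations such that p(A_i) ≥ p(A_j) for all j ∈ [n], where p_j = max_{k∈[n]} (w_k + η) v̄_k(j)} is a closed subset of the simplex Δ_{n−1}. -/

import Mathlib

open Finset

/-- Value of a bundle under an additive valuation. -/
def bval {α : Type*} (u : α → ℝ) (S : Finset α) : ℝ := ∑ j ∈ S, u j

/-- An allocation: every item belongs to exactly one agent's bundle. -/
def IsAlloc {n : ℕ} {I : Type*} (A : Fin n → Finset I) : Prop :=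
  ∀ j : I, ∃! i : Fin n, j ∈ A i

/-- the set `C i` of weight vectors `w` in the simplex for which
some allocation maximizing the `(w+η)`-weighted welfare gives agent `i` a
highest-priced bundle (prices `p j = max_k (w k + η) * v̄ k j`) is closed. -/
theorem stmt10 (n m : ℕ) (hn : 0 < n) (vb : Fin n → Fin (m+1) → ℝ)
    (η : ℝ) (hη : 0 < η) (i : Fin n) :
    IsClosed {w : Fin n → ℝ | w ∈ stdSimplex ℝ (Fin n) ∧
      ∃ A : Fin n → Finset (Fin (m+1)), IsAlloc A ∧
        (∀ B : Fin n → Finset (Fin (m+1)), IsAlloc B →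
          ∑ k, (w k + η) * bval (vb k) (B k) ≤ ∑ k, (w k + η) * bval (vb k) (A k)) ∧
        ∀ j : Fin n,
          (∑ t ∈ A j, ⨆ k, (w k + η) * vb k t) ≤ ∑ t ∈ A i, ⨆ k, (w k + η) * vb k t} := by
  haveI : NeZero n := ⟨hn.ne'⟩
  -- continuity of welfare functions
  have hwel : ∀ B : Fin n → Finset (Fin (m+1)),
      Continuous fun w : Fin n → ℝ => ∑ k, (w k + η) * bval (vb k) (B k) := by
    intro B
    exact continuous_finset_sum _ fun k _ =>
      (((continuous_apply k).add continuous_const).mul continuous_const)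
  -- continuity of price functions
  have hsup : ∀ t : Fin (m+1),
      Continuous fun w : Fin n → ℝ => ⨆ k, (w k + η) * vb k t := by
    intro t
    have h : (fun w : Fin n → ℝ => ⨆ k, (w k + η) * vb k t)
        = fun w => Finset.univ.sup' Finset.univ_nonempty
            (fun k => (w k + η) * vb k t) := by
      funext w; rw [Finset.sup'_univ_eq_ciSup]
    rw [h]
    exact Continuous.finset_sup'_apply _ fun k _ =>
      (((continuous_apply k).add continuous_const).mul continuous_const)
  have hprice : ∀ S : Finset (Fin (m+1)),
      Continuous fun w : Fin n → ℝ => ∑ t ∈ S, ⨆ k, (w k + η) * vb k t :=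
    fun S => continuous_finset_sum _ fun t _ => hsup t
  have hrw : {w : Fin n → ℝ | w ∈ stdSimplex ℝ (Fin n) ∧
      ∃ A : Fin n → Finset (Fin (m+1)), IsAlloc A ∧
        (∀ B : Fin n → Finset (Fin (m+1)), IsAlloc B →
          ∑ k, (w k + η) * bval (vb k) (B k) ≤ ∑ k, (w k + η) * bval (vb k) (A k)) ∧
        ∀ j : Fin n,
          (∑ t ∈ A j, ⨆ k, (w k + η) * vb k t) ≤ ∑ t ∈ A i, ⨆ k, (w k + η) * vb k t}
      = ⋃ A : Fin n → Finset (Fin (m+1)),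
        {w : Fin n → ℝ | w ∈ stdSimplex ℝ (Fin n)} ∩
        {w : Fin n → ℝ | IsAlloc A ∧
          (∀ B : Fin n → Finset (Fin (m+1)), IsAlloc B →
            ∑ k, (w k + η) * bval (vb k) (B k) ≤ ∑ k, (w k + η) * bval (vb k) (A k)) ∧
          ∀ j : Fin n,
            (∑ t ∈ A j, ⨆ k, (w k + η) * vb k t) ≤ ∑ t ∈ A i, ⨆ k, (w k + η) * vb k t} := by
    ext w
    simp only [Set.mem_setOf_eq, Set.mem_iUnion, Set.mem_inter_iff]
    tauto
  rw [hrw]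
  apply isClosed_iUnion_of_finite
  intro A
  apply IsClosed.inter (isClosed_stdSimplex ℝ (Fin n))
  by_cases hA : IsAlloc A
  · have hrw2 : {w : Fin n → ℝ | IsAlloc A ∧
        (∀ B : Fin n → Finset (Fin (m+1)), IsAlloc B →
          ∑ k, (w k + η) * bval (vb k) (B k) ≤ ∑ k, (w k + η) * bval (vb k) (A k)) ∧
        ∀ j : Fin n,
          (∑ t ∈ A j, ⨆ k, (w k + η) * vb k t) ≤ ∑ t ∈ A i, ⨆ k, (w k + η) * vb k t}
        = (⋂ B : Fin n → Finset (Fin (m+1)), {w : Fin n → ℝ | IsAlloc B →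
            ∑ k, (w k + η) * bval (vb k) (B k) ≤ ∑ k, (w k + η) * bval (vb k) (A k)}) ∩
          ⋂ j : Fin n, {w : Fin n → ℝ |
            (∑ t ∈ A j, ⨆ k, (w k + η) * vb k t) ≤ ∑ t ∈ A i, ⨆ k, (w k + η) * vb k t} := by
      ext w
      simp only [Set.mem_setOf_eq, Set.mem_inter_iff, Set.mem_iInter]
      tauto
    rw [hrw2]
    apply IsClosed.inter
    · apply isClosed_iInter
      intro B
      by_cases hB : IsAlloc B
      · have : {w : Fin n → ℝ | IsAlloc B →
            ∑ k, (w k + η) * bval (vb k) (B k) ≤ ∑ k, (w k + η) * bval (vb k) (A k)}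
            = {w : Fin n → ℝ |
            ∑ k, (w k + η) * bval (vb k) (B k) ≤ ∑ k, (w k + η) * bval (vb k) (A k)} := by
          ext w; simp [hB]
        rw [this]
        exact isClosed_le (hwel B) (hwel A)
      · have : {w : Fin n → ℝ | IsAlloc B →
            ∑ k, (w k + η) * bval (vb k) (B k) ≤ ∑ k, (w k + η) * bval (vb k) (A k)}
            = Set.univ := by
          ext w; simp [hB]
        rw [this]; exact isClosed_univ
    · exact isClosed_iInter fun j => isClosed_le (hprice (A j)) (hprice (A i))
  · have : {w : Fin n → ℝ | IsAlloc A ∧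
        (∀ B : Fin n → Finset (Fin (m+1)), IsAlloc B →
          ∑ k, (w k + η) * bval (vb k) (B k) ≤ ∑ k, (w k + η) * bval (vb k) (A k)) ∧
        ∀ j : Fin n,
          (∑ t ∈ A j, ⨆ k, (w k + η) * vb k t) ≤ ∑ t ∈ A i, ⨆ k, (w k + η) * vb k t}
        = ∅ := by
      ext w; simp [hA]
    rw [this]; exact isClosed_empty
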